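/- Let x̂ < b be real numbers and let v : [x̂, b] → ℝ be continuous with v(x̂) = 0, differentiable at x̂ with v'(x̂) > 0. Set V(x) = ∫_{x̂}^{x} v(s) ds and assume V(z) > 0 for all z ∈ (x̂, b]. Then lim_{ε → 0⁺} (1/ε) ∫_{x̂}^{b} exp(-V(z)/ε²) dz = √(π / (2 v'(x̂))). -/

import Mathlib

open Real Filter intervalIntegral

set_option maxHeartbeats 4000000 in
/-- Laplace's method at the left endpoint: if `V(x) = ∫_{x̂}^{x} v`, with `v(x̂) = 0`,
`v'(x̂) > 0` and `V > 0` on `(x̂, b]`, then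
`(1/ε) ∫_{x̂}^{b} exp(-V(z)/ε²) dz → √(π/(2 v'(x̂)))` as `ε → 0⁺`. -/
theorem laplace_method_half_gaussian
    (xhat b : ℝ) (hxb : xhat < b)
    (v : ℝ → ℝ) (hv_cont : ContinuousOn v (Set.Icc xhat b))
    (hvhat : v xhat = 0)
    (vp : ℝ) (hvp : HasDerivAt v vp xhat) (hvp_pos : 0 < vp)
    (V : ℝ → ℝ) (hV : ∀ x, V x = ∫ s in xhat..x, v s)
    (hVpos : ∀ z ∈ Set.Ioc xhat b, 0 < V z) :
    Tendsto (fun ε : ℝ => (1 / ε) * ∫ z in xhat..b, Real.exp (-V z / ε ^ 2))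
      (nhdsWithin 0 (Set.Ioi 0)) (nhds (Real.sqrt (π / (2 * vp)))) := by
  have hb0 : (0:ℝ) < b - xhat := by linarith
  -- continuity of `s ↦ v (xhat + s)`
  have hvcomp : ContinuousOn (fun s => v (xhat + s)) (Set.Icc 0 (b - xhat)) := by
    apply hv_cont.comp (continuous_const.add continuous_id).continuousOn
    intro s hs
    show xhat + s ∈ Set.Icc xhat b
    exact ⟨by linarith [hs.1], by linarith [hs.2]⟩
  -- V(x̂+h) = ∫_0^h v(x̂+s)
  have hVeq : ∀ h : ℝ, V (xhat + h) = ∫ s in (0:ℝ)..h, v (xhat + s) := by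
    intro h
    rw [hV, intervalIntegral.integral_comp_add_left (fun s => v s) xhat]
    norm_num
  -- derivative estimate for v
  have hvest : ∀ η : ℝ, 0 < η → ∃ δ : ℝ, 0 < δ ∧
      ∀ s ∈ Set.Icc (0:ℝ) δ, |v (xhat + s) - vp * s| ≤ η * s := by
    intro η hη
    have h1 := (hasDerivAt_iff_isLittleO.mp hvp).def hη
    rw [Metric.eventually_nhds_iff] at h1
    obtain ⟨δ, hδ, hd⟩ := h1
    refine ⟨δ / 2, by positivity, fun s hs => ?_⟩
    have hy : dist (xhat + s) xhat < δ := by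
      rw [Real.dist_eq, add_sub_cancel_left, abs_of_nonneg hs.1]
      linarith [hs.2]
    have := hd hy
    rw [add_sub_cancel_left] at this
    simp only [hvhat, sub_zero, smul_eq_mul, Real.norm_eq_abs] at this
    rw [abs_of_nonneg hs.1] at this
    calc |v (xhat + s) - vp * s| = |v (xhat + s) - s * vp| := by ring_nf
      _ ≤ η * s := this
  -- second-order estimate for V
  have hVest : ∀ η : ℝ, 0 < η → ∃ δ : ℝ, 0 < δ ∧ δ ≤ b - xhat ∧
      ∀ s ∈ Set.Icc (0:ℝ) δ, |V (xhat + s) - vp * s ^ 2 / 2| ≤ η * s ^ 2 / 2 := by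
    intro η hη
    obtain ⟨δ₀, hδ₀, hd⟩ := hvest η hη
    refine ⟨min δ₀ (b - xhat), lt_min hδ₀ hb0, min_le_right _ _, fun s hs => ?_⟩
    have hs0 : 0 ≤ s := hs.1
    have hsδ : s ≤ δ₀ := le_trans hs.2 (min_le_left _ _)
    have hsb : s ≤ b - xhat := le_trans hs.2 (min_le_right _ _)
    have hint : IntervalIntegrable (fun u => v (xhat + u)) MeasureTheory.volume 0 s := by
      apply ContinuousOn.intervalIntegrable
      rw [Set.uIcc_of_le hs0]
      exact hvcomp.mono (Set.Icc_subset_Icc le_rfl hsb)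
    have hint2 : IntervalIntegrable (fun u => vp * u) MeasureTheory.volume 0 s :=
      (continuous_const.mul continuous_id).intervalIntegrable 0 s
    have hid : (∫ u in (0:ℝ)..s, vp * u) = vp * s ^ 2 / 2 := by
      rw [intervalIntegral.integral_const_mul, integral_id]; ring
    have hsub : V (xhat + s) - vp * s ^ 2 / 2
        = ∫ u in (0:ℝ)..s, (v (xhat + u) - vp * u) := by
      rw [intervalIntegral.integral_sub hint hint2, hVeq, hid]
    rw [hsub]
    calc |∫ u in (0:ℝ)..s, (v (xhat + u) - vp * u)|
        ≤ ∫ u in (0:ℝ)..s, |v (xhat + u) - vp * u| :=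
          intervalIntegral.abs_integral_le_integral_abs hs0
      _ ≤ ∫ u in (0:ℝ)..s, η * u := by
          apply intervalIntegral.integral_mono_on hs0 (hint.sub hint2).abs
            ((continuous_const.mul continuous_id).intervalIntegrable 0 s)
          exact fun u hu => hd u ⟨hu.1, le_trans hu.2 hsδ⟩
      _ = η * s ^ 2 / 2 := by rw [intervalIntegral.integral_const_mul, integral_id]; ring
  -- continuity of V
  have hVcont : ContinuousOn V (Set.Icc xhat b) := by
    have h1 : ContinuousOn (fun x => ∫ s in xhat..x, v s) (Set.Icc xhat b) := by
      have h2 : MeasureTheory.IntegrableOn v (Set.uIcc xhat b) MeasureTheory.volume := by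
        rw [Set.uIcc_of_le hxb.le]; exact hv_cont.integrableOn_Icc
      have := intervalIntegral.continuousOn_primitive_interval h2
      rwa [Set.uIcc_of_le hxb.le] at this
    exact h1.congr (fun x _ => hV x)
  -- quadratic lower bound near xhat
  obtain ⟨δ, hδpos, hδle, hVlow⟩ : ∃ δ : ℝ, 0 < δ ∧ δ ≤ b - xhat ∧
      ∀ s ∈ Set.Icc (0:ℝ) δ, vp / 4 * s ^ 2 ≤ V (xhat + s) := by
    obtain ⟨δ, h1, h2, h3⟩ := hVest (vp / 2) (by positivity)
    refine ⟨δ, h1, h2, fun s hs => ?_⟩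
    have := h3 s hs
    rw [abs_le] at this
    nlinarith [this.1]
  -- minimum of V away from xhat
  obtain ⟨z₀, hz₀mem, hz₀min⟩ := isCompact_Icc.exists_isMinOn
    (Set.nonempty_Icc.mpr (by linarith : xhat + δ ≤ b))
    (hVcont.mono (Set.Icc_subset_Icc (by linarith) le_rfl))
  set m := V z₀ with hm_def
  have hm : 0 < m := hVpos z₀ ⟨by linarith [hz₀mem.1], hz₀mem.2⟩
  set c := min (vp / 4) (m / (b - xhat) ^ 2) with hc_def
  have hc : 0 < c := lt_min (by positivity) (div_pos hm (by positivity))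
  have hcb : c * (b - xhat) ^ 2 ≤ m := by
    have h1 : c ≤ m / (b - xhat) ^ 2 := min_le_right _ _
    rw [le_div_iff₀ (by positivity)] at h1
    exact h1
  -- global bound
  have hbound : ∀ ε : ℝ, 0 < ε → ∀ t ∈ Set.Ioc (0:ℝ) ((b - xhat) / ε),
      Real.exp (-V (ε * t + xhat) / ε ^ 2) ≤ Real.exp (-c * t ^ 2) := by
    intro ε hε t ht
    rw [Real.exp_le_exp]
    have hts : 0 < ε * t := mul_pos hε ht.1
    have htb : ε * t ≤ b - xhat := by
      rw [mul_comm]; exact (le_div_iff₀ hε).mp ht.2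
    have hrw : ε * t + xhat = xhat + ε * t := by ring
    rw [hrw, neg_div, neg_mul, neg_le_neg_iff, le_div_iff₀ (by positivity : (0:ℝ) < ε ^ 2)]
    rcases le_or_gt (ε * t) δ with hcase | hcase
    · have h1 := hVlow (ε * t) ⟨hts.le, hcase⟩
      have h2 : c ≤ vp / 4 := min_le_left _ _
      nlinarith [sq_nonneg (ε * t), sq_nonneg t, sq_nonneg ε, mul_pos hε ht.1]
    · have hmem : xhat + ε * t ∈ Set.Icc (xhat + δ) b := ⟨by linarith, by linarith⟩
      have h1 : m ≤ V (xhat + ε * t) := hz₀min hmem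
      have h2 : (ε * t) * (ε * t) ≤ (b - xhat) * (b - xhat) :=
        mul_self_le_mul_self hts.le htb
      nlinarith [hc.le]
  -- pointwise limit of the exponent
  have hptlim : ∀ t : ℝ, 0 < t →
      Tendsto (fun ε => V (xhat + ε * t) / ε ^ 2) (nhdsWithin 0 (Set.Ioi 0))
        (nhds (vp * t ^ 2 / 2)) := by
    intro t ht
    rw [Metric.tendsto_nhdsWithin_nhds]
    intro r hr
    obtain ⟨δ', h1, h2, h3⟩ := hVest (r / t ^ 2) (by positivity)
    refine ⟨δ' / t, by positivity, fun {ε} hε hdist => ?_⟩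
    have hε0 : 0 < ε := hε
    have hεt : ε * t ≤ δ' := by
      rw [Real.dist_eq, sub_zero, abs_of_pos hε0] at hdist
      have : ε * t < δ' := (lt_div_iff₀ ht).mp hdist
      linarith
    have key := h3 (ε * t) ⟨(mul_pos hε0 ht).le, hεt⟩
    rw [Real.dist_eq]
    have hεsq : (0:ℝ) < ε ^ 2 := by positivity
    have heq : V (xhat + ε * t) / ε ^ 2 - vp * t ^ 2 / 2
        = (V (xhat + ε * t) - vp * (ε * t) ^ 2 / 2) / ε ^ 2 := by
      field_simp
    rw [heq, abs_div, abs_of_pos hεsq, div_lt_iff₀ hεsq]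
    calc |V (xhat + ε * t) - vp * (ε * t) ^ 2 / 2| ≤ r / t ^ 2 * (ε * t) ^ 2 / 2 := key
      _ = r * ε ^ 2 / 2 := by field_simp
      _ < r * ε ^ 2 := by nlinarith
  -- the dominated convergence setup
  set B : ℝ → ℝ := fun ε => (b - xhat) / ε with hB
  set F : ℝ → ℝ → ℝ := fun ε =>
    (Set.Ioc (0:ℝ) (B ε)).indicator (fun t => Real.exp (-V (ε * t + xhat) / ε ^ 2)) with hF
  set f : ℝ → ℝ := (Set.Ioi (0:ℝ)).indicator (fun t => Real.exp (-(vp / 2) * t ^ 2)) with hf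
  have hmain : Tendsto (fun ε => ∫ t, F ε t) (nhdsWithin 0 (Set.Ioi 0)) (nhds (∫ t, f t)) := by
    apply MeasureTheory.tendsto_integral_filter_of_dominated_convergence
      (fun t => Real.exp (-c * t ^ 2))
    · filter_upwards [self_mem_nhdsWithin] with ε (hε : ε ∈ Set.Ioi (0:ℝ))
      apply (aestronglyMeasurable_indicator_iff measurableSet_Ioc).mpr
      apply ContinuousOn.aestronglyMeasurable _ measurableSet_Ioc
      apply Real.continuous_exp.comp_continuousOn
      apply ContinuousOn.div_const
      apply ContinuousOn.neg
      apply hVcont.comp ((continuous_const.mul continuous_id).add continuous_const).continuousOn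
      intro t ht
      have h1 : 0 < ε * t := mul_pos hε ht.1
      have h2 : ε * t ≤ b - xhat := by
        rw [mul_comm]; exact (le_div_iff₀ hε).mp ht.2
      refine Set.mem_Icc.mpr ⟨?_, ?_⟩ <;> simp only [Pi.add_apply, Pi.mul_apply, id_eq] <;> linarith
    · filter_upwards [self_mem_nhdsWithin] with ε (hε : ε ∈ Set.Ioi (0:ℝ))
      apply MeasureTheory.ae_of_all
      intro t
      rw [Real.norm_eq_abs]
      by_cases ht : t ∈ Set.Ioc (0:ℝ) (B ε)
      · rw [hF]
        simp only [Set.indicator_of_mem ht]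
        rw [abs_of_pos (Real.exp_pos _)]
        exact hbound ε hε t ht
      · rw [hF]
        simp only [Set.indicator_of_notMem ht, abs_zero]
        exact (Real.exp_pos _).le
    · exact integrable_exp_neg_mul_sq hc
    · apply MeasureTheory.ae_of_all
      intro t
      rcases le_or_gt t 0 with ht | ht
      · have h1 : ∀ ε : ℝ, F ε t = 0 := by
          intro ε
          rw [hF]
          exact Set.indicator_of_notMem (fun hmem => absurd hmem.1 (not_lt.mpr ht)) _
        have h2 : f t = 0 := by
          rw [hf]
          exact Set.indicator_of_notMem (by simpa using ht) _
        simp only [h1, h2]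
        exact tendsto_const_nhds
      · have h2 : f t = Real.exp (-(vp / 2) * t ^ 2) := by
          rw [hf]; exact Set.indicator_of_mem ht _
        rw [h2]
        have hlim2 : Tendsto (fun ε : ℝ => Real.exp (-V (xhat + ε * t) / ε ^ 2))
            (nhdsWithin 0 (Set.Ioi 0)) (nhds (Real.exp (-(vp / 2) * t ^ 2))) := by
          have h3 := ((hptlim t ht).neg)
          have h4 := (Real.continuous_exp.tendsto _).comp h3
          have h5 : -(vp * t ^ 2 / 2) = -(vp / 2) * t ^ 2 := by ring
          rw [h5] at h4
          apply h4.congr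
          intro ε
          simp [Function.comp, neg_div]
        apply hlim2.congr'
        filter_upwards [Ioo_mem_nhdsGT_of_mem ⟨le_refl (0:ℝ), div_pos hb0 ht⟩] with ε hε
        have hmem : t ∈ Set.Ioc (0:ℝ) (B ε) := by
          refine ⟨ht, ?_⟩
          rw [hB]
          rw [le_div_iff₀ hε.1]
          have := (lt_div_iff₀ ht).mp hε.2
          nlinarith
        rw [hF]
        simp only [Set.indicator_of_mem hmem]
        rw [add_comm xhat (ε * t)]
  -- identify ∫ F ε with the original expression
  have hFeq : ∀ᶠ ε in nhdsWithin 0 (Set.Ioi 0),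
      (∫ t, F ε t) = (1 / ε) * ∫ z in xhat..b, Real.exp (-V z / ε ^ 2) := by
    filter_upwards [self_mem_nhdsWithin] with ε (hε : (0:ℝ) < ε)
    rw [hF]
    rw [MeasureTheory.integral_indicator measurableSet_Ioc]
    rw [← intervalIntegral.integral_of_le (div_nonneg hb0.le hε.le : (0:ℝ) ≤ B ε)]
    rw [intervalIntegral.integral_comp_mul_add (a := 0) (b := B ε)
      (fun z => Real.exp (-V z / ε ^ 2)) hε.ne' xhat]
    have e1 : ε * 0 + xhat = xhat := by ring
    have e2 : ε * B ε + xhat = b := by rw [hB]; field_simp; ring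
    rw [e1, e2, smul_eq_mul, one_div]
  -- value of the limit integral
  have hval : (∫ t, f t) = Real.sqrt (π / (2 * vp)) := by
    rw [hf, MeasureTheory.integral_indicator measurableSet_Ioi]
    rw [integral_gaussian_Ioi]
    rw [show π / (vp / 2) = 2 ^ 2 * (π / (2 * vp)) by field_simp]
    rw [Real.sqrt_mul (by positivity), Real.sqrt_sq (by norm_num : (0:ℝ) ≤ 2)]
    ring
  rw [← hval]
  exact hmain.congr' hFeq
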